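/- Let Q ∈ ℂ[t] and q ≥ 2 a natural number. Suppose that for every primitive or non-primitive q-th root of unity ζ ≠ 1, the polynomial Q(t) − Q(ζt) has t = 0 as its only root (or is identically zero). Then Q can be written as Q(t) = b t^p + F(t^q) for some b ∈ ℂ, a natural number p, and a polynomial F ∈ ℂ[t]. -/
import Mathlib
open Polynomial

private lemma coeff_comp_CX (p : ℂ[X]) (ζ : ℂ) (n : ℕ) :
    (p.comp (C ζ * X)).coeff n = ζ^n * p.coeff n := by
  rw [comp_eq_sum_left, Polynomial.sum_def, finset_sum_coeff]
  simp only [mul_pow, ← C_pow, ← mul_assoc, ← C_mul, coeff_C_mul, coeff_X_pow, mul_ite, mul_zero, mul_one]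
  rw [Finset.sum_ite_eq p.support n (fun e => p.coeff e * ζ ^ e)]
  by_cases hn : n ∈ p.support
  · simp [hn, mul_comm]
  · simp [hn, notMem_support_iff.mp hn]

private lemma monom_of_roots_zero (R : ℂ[X]) (hR : R ≠ 0)
    (h0 : ∀ t : ℂ, R.eval t = 0 → t = 0) :
    R = C R.leadingCoeff * X ^ R.natDegree := by
  have hcard : R.roots.card = R.natDegree :=
    splits_iff_card_roots.mp (IsAlgClosed.splits R)
  have hrep : R.roots = Multiset.replicate R.natDegree 0 := by
    rw [Multiset.eq_replicate]
    refine ⟨hcard, fun a ha => ?_⟩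
    exact h0 a ((mem_roots hR).mp ha)
  have := C_leadingCoeff_mul_prod_multiset_X_sub_C hcard
  rw [hrep] at this
  simpa [Multiset.map_replicate, Multiset.prod_replicate] using this.symm

private lemma build (Q : ℂ[X]) (q m : ℕ) (hm : ¬ q ∣ m)
    (hcoe : ∀ n, ¬ q ∣ n → n ≠ m → Q.coeff n = 0) :
    ∃ (b : ℂ) (p : ℕ) (F : ℂ[X]), Q = C b * X ^ p + F.comp (X ^ q) := by
  refine ⟨Q.coeff m, m, ∑ n ∈ Q.support.filter (q ∣ ·), C (Q.coeff n) * X ^ (n / q), ?_⟩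
  ext k
  rw [coeff_add, coeff_C_mul, coeff_X_pow]
  have hcomp : ((∑ n ∈ Q.support.filter (q ∣ ·), C (Q.coeff n) * X ^ (n / q)).comp (X ^ q)).coeff k
      = if q ∣ k ∧ k ∈ Q.support then Q.coeff k else 0 := by
    rw [show ∀ (s : Finset ℕ) (f : ℕ → ℂ[X]) (g : ℂ[X]), (∑ n ∈ s, f n).comp g = ∑ n ∈ s, (f n).comp g from fun s f g => by simp [Polynomial.comp, eval₂_finset_sum], finset_sum_coeff]
    have : ∀ n ∈ Q.support.filter (q ∣ ·),
        ((C (Q.coeff n) * X ^ (n / q)).comp (X ^ q)).coeff k = if n = k then Q.coeff n else 0 := by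
      intro n hn
      have hdvd : q ∣ n := (Finset.mem_filter.mp hn).2
      rw [mul_comp, C_comp, pow_comp, X_comp, ← pow_mul, coeff_C_mul, coeff_X_pow,
        Nat.mul_div_cancel' hdvd]
      simp [eq_comm, mul_ite]
    rw [Finset.sum_congr rfl this, Finset.sum_ite_eq' _ k (fun n => Q.coeff n)]
    by_cases hk : q ∣ k ∧ k ∈ Q.support
    · simp [Finset.mem_filter, hk.1, hk.2]
    · rw [if_neg hk]
      split_ifs with h2
      · have := Finset.mem_filter.mp h2
        exact absurd ⟨this.2, this.1⟩ hk
      · rfl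
  rw [hcomp]
  by_cases hk : k = m
  · subst hk
    have : ¬ (q ∣ k ∧ k ∈ Q.support) := fun h => hm h.1
    simp [this]
    exact fun hd => absurd hd hm
  · rw [if_neg hk, mul_zero, zero_add]
    by_cases hd : q ∣ k
    · by_cases hs : k ∈ Q.support
      · simp [hd, hs]
      · simp [hd, hs, notMem_support_iff.mp hs]
    · rw [if_neg (fun h => hd h.1)]
      exact hcoe k hd hk

theorem stmt_1 (Q : Polynomial ℂ) (q : ℕ) (hq : 2 ≤ q)
    (h : ∀ ζ : ℂ, ζ ^ q = 1 → ζ ≠ 1 →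
      (Q - Q.comp (Polynomial.C ζ * Polynomial.X) = 0 ∨
        ∀ t : ℂ, (Q - Q.comp (Polynomial.C ζ * Polynomial.X)).eval t = 0 → t = 0)) :
    ∃ (b : ℂ) (p : ℕ) (F : Polynomial ℂ),
      Q = Polynomial.C b * Polynomial.X ^ p + F.comp (Polynomial.X ^ q) := by
  obtain ⟨ζ, hζ⟩ : ∃ ζ : ℂ, IsPrimitiveRoot ζ q :=
    ⟨_, Complex.isPrimitiveRoot_exp q (by omega)⟩
  have hζq : ζ ^ q = 1 := hζ.pow_eq_one
  have hζ1 : ζ ≠ 1 := hζ.ne_one (by omega)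
  have hRcoeff : ∀ n, (Q - Q.comp (C ζ * X)).coeff n = (1 - ζ ^ n) * Q.coeff n := by
    intro n; rw [coeff_sub, coeff_comp_CX, sub_mul, one_mul]
  have hzero : ∀ n, ¬ q ∣ n → (Q - Q.comp (C ζ * X)).coeff n = 0 → Q.coeff n = 0 := by
    intro n hn hc
    rw [hRcoeff] at hc
    rcases mul_eq_zero.mp hc with h1 | h1
    · exact absurd (hζ.pow_eq_one_iff_dvd n |>.mp (by linear_combination -h1)) hn
    · exact h1
  rcases h ζ hζq hζ1 with hR | hR
  · refine build Q q 1 (by simp [Nat.dvd_one]; omega) (fun n hn hne => hzero n hn ?_)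
    rw [hR]; rfl
  · set R := Q - Q.comp (C ζ * X) with hRdef
    by_cases hR0 : R = 0
    · refine build Q q 1 (by simp [Nat.dvd_one]; omega) (fun n hn hne => hzero n hn (by rw [hR0]; rfl))
    · have hmono := monom_of_roots_zero R hR0 hR
      set m := R.natDegree with hmdef
      have hqm : ¬ q ∣ m := by
        intro hd
        have : R.coeff m = (1 - ζ ^ m) * Q.coeff m := hRcoeff m
        rw [hζ.pow_eq_one_iff_dvd m |>.mpr hd] at this
        simp only [sub_self, zero_mul] at this
        exact hR0 (leadingCoeff_eq_zero.mp (by rwa [leadingCoeff]))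
      refine build Q q m hqm (fun n hn hne => hzero n hn ?_)
      rw [hmono, coeff_C_mul, coeff_X_pow, if_neg hne, mul_zero]
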